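/- arXiv:1808.10818 — 3 statements merged into one kernel-verified Lean document; each statement's English description precedes it below -/
import Mathlib

section
/- Let N ≥ 1 and d, n be positive integers. If there exist polynomials P, Q ∈ ℤ[X] such that d·Xⁿ = P(X)·X^{n+1} + Q(X)·((X+1)^N − 1) in ℤ[X], then N divides d. -/
open Polynomial in
/-- If `d·Xⁿ = P(X)·X^{n+1} + Q(X)·((X+1)^N − 1)` in `ℤ[X]`, then `N ∣ d`. -/
theorem stmt4 (N d n : ℕ) (hN : 1 ≤ N) (hd : 0 < d) (hn : 0 < n)
    (P Q : Polynomial ℤ)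
    (h : C (d : ℤ) * X ^ n = P * X ^ (n + 1) + Q * ((X + 1) ^ N - 1)) :
    N ∣ d := by
  -- Factor (X+1)^N - 1 = X * S
  have hXdvd : (X : ℤ[X]) ∣ ((X + 1) ^ N - 1) := by
    rw [Polynomial.X_dvd_iff]
    simp [Polynomial.coeff_X_add_one_pow]
  obtain ⟨S, hS⟩ := hXdvd
  -- S.coeff 0 = N
  have hS0 : S.coeff 0 = (N : ℤ) := by
    have h1 : ((X + 1 : ℤ[X]) ^ N - 1).coeff 1 = (N : ℤ) := by
      simp [Polynomial.coeff_X_add_one_pow, Polynomial.coeff_one]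
    rw [hS, Polynomial.coeff_X_mul] at h1
    exact h1
  have hXS : ¬ (X : ℤ[X]) ∣ S := by
    rw [Polynomial.X_dvd_iff, hS0]
    exact_mod_cast Nat.one_le_iff_ne_zero.mp hN
  -- X^n ∣ Q * X
  have hdvd : (X : ℤ[X]) ^ n ∣ (Q * X) * S := by
    have heq : (Q * X) * S = C (d : ℤ) * X ^ n - P * X ^ (n + 1) := by
      have : (Q * X) * S = Q * ((X + 1) ^ N - 1) := by rw [hS]; ring
      rw [this, h]; ring
    rw [heq]
    exact dvd_sub ⟨C (d : ℤ), by ring⟩ ⟨P * X, by ring⟩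
  have hQX : (X : ℤ[X]) ^ n ∣ Q * X :=
    (Polynomial.prime_X.pow_dvd_of_dvd_mul_right n hXS) hdvd
  -- hence X^(n-1) ∣ Q
  obtain ⟨m, rfl⟩ : ∃ m, n = m + 1 := ⟨n - 1, by omega⟩
  have hQ : (X : ℤ[X]) ^ m ∣ Q := by
    obtain ⟨R, hR⟩ := hQX
    refine ⟨R, ?_⟩
    have hX0 : (X : ℤ[X]) ≠ 0 := Polynomial.X_ne_zero
    apply mul_right_cancel₀ hX0
    rw [hR]; ring
  obtain ⟨R, rfl⟩ := hQ
  -- cancel X^(m+1)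
  have hc : C (d : ℤ) = P * X + R * S := by
    have hne : (X : ℤ[X]) ^ (m + 1) ≠ 0 := pow_ne_zero _ Polynomial.X_ne_zero
    apply mul_left_cancel₀ hne
    have := h
    rw [hS] at this
    calc (X : ℤ[X]) ^ (m + 1) * C (d : ℤ) = C (d : ℤ) * X ^ (m + 1) := by ring
      _ = P * X ^ (m + 1 + 1) + X ^ m * R * (X * S) := this
      _ = X ^ (m + 1) * (P * X + R * S) := by ring
  -- evaluate at 0
  have := congrArg (Polynomial.eval 0) hc
  simp [hS0, Polynomial.coeff_zero_eq_eval_zero] at this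
  have : (N : ℤ) ∣ (d : ℤ) := ⟨R.eval 0, by
    rw [this]
    have : S.eval 0 = (N : ℤ) := by rw [← Polynomial.coeff_zero_eq_eval_zero, hS0]
    rw [this]; ring⟩
  exact_mod_cast this
end

section
/- Let p be a prime. In the ring ℤ[X, Y]/((X+1)^p − 1, (Y+1)^p − 1), the element X^p·Y − X·Y^p lies in the ideal generated by all monomials X^a·Y^b with a + b ≥ p + 2. -/
lemma aux_exists {R : Type*} [CommRing R] (p : ℕ) (hp : p.Prime) (x : R) :
    ∃ H : R, (x + 1) ^ p = 1 + x ^ p + p * x + p * x ^ 2 * H := by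
  have h2 : 2 ≤ p := hp.two_le
  refine ⟨∑ k ∈ Finset.Ico 2 p, ((p.choose k / p : ℕ) : R) * x ^ (k - 2), ?_⟩
  rw [add_pow]
  have hsplit : ∑ k ∈ Finset.range (p + 1), x ^ k * 1 ^ (p - k) * (p.choose k : R)
      = (∑ k ∈ Finset.Ico 0 2, x ^ k * 1 ^ (p - k) * (p.choose k : R))
        + (∑ k ∈ Finset.Ico 2 p, x ^ k * 1 ^ (p - k) * (p.choose k : R))
        + x ^ p * 1 ^ (p - p) * (p.choose p : R) := by
    rw [Finset.sum_range_succ, Finset.range_eq_Ico,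
      ← Finset.sum_Ico_consecutive _ (Nat.zero_le 2) h2]
  rw [hsplit]
  have hmid : ∑ k ∈ Finset.Ico 2 p, x ^ k * 1 ^ (p - k) * (p.choose k : R)
      = p * x ^ 2 * ∑ k ∈ Finset.Ico 2 p, ((p.choose k / p : ℕ) : R) * x ^ (k - 2) := by
    rw [Finset.mul_sum]
    refine Finset.sum_congr rfl fun k hk => ?_
    simp only [Finset.mem_Ico] at hk
    have hdvd : p ∣ p.choose k := hp.dvd_choose_self (by omega) hk.2
    have hc : ((p.choose k : ℕ) : R) = (p : R) * ((p.choose k / p : ℕ) : R) := by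
      rw [← Nat.cast_mul, Nat.mul_div_cancel' hdvd]
    have hxk : x ^ k = x ^ 2 * x ^ (k - 2) := by
      rw [← pow_add]; congr 1; omega
    rw [hc, hxk]; ring
  rw [hmid]
  have h01 : ∑ k ∈ Finset.Ico 0 2, x ^ k * 1 ^ (p - k) * (p.choose k : R) = 1 + p * x := by
    rw [← Finset.range_eq_Ico, Finset.sum_range_succ, Finset.sum_range_one]
    simp [mul_comm]
  rw [h01]
  simp
  ring

open MvPolynomial in
/-- In `ℤ[X,Y]/((X+1)^p − 1, (Y+1)^p − 1)`, the element `X^p·Y − X·Y^p` lies in the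
ideal generated by the monomials `X^a·Y^b` with `a + b ≥ p + 2`. -/
theorem stmt6 (p : ℕ) (hp : p.Prime) :
    Ideal.Quotient.mk
        (Ideal.span {((X 0 + 1) ^ p - 1 : MvPolynomial (Fin 2) ℤ), (X 1 + 1) ^ p - 1})
        (X 0 ^ p * X 1 - X 0 * X 1 ^ p) ∈
      Ideal.span {z : MvPolynomial (Fin 2) ℤ ⧸
          Ideal.span {((X 0 + 1) ^ p - 1 : MvPolynomial (Fin 2) ℤ), (X 1 + 1) ^ p - 1} |
        ∃ a b : ℕ, p + 2 ≤ a + b ∧ z =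
          Ideal.Quotient.mk
            (Ideal.span {((X 0 + 1) ^ p - 1 : MvPolynomial (Fin 2) ℤ), (X 1 + 1) ^ p - 1})
            (X 0 ^ a * X 1 ^ b)} := by
  set A := MvPolynomial (Fin 2) ℤ
  set I : Ideal A := Ideal.span {((X 0 + 1) ^ p - 1 : A), (X 1 + 1) ^ p - 1} with hI
  set M : Ideal A := Ideal.span {f : A | ∃ a b : ℕ, p + 2 ≤ a + b ∧ f = X 0 ^ a * X 1 ^ b}
    with hM
  have hset : {z : A ⧸ I | ∃ a b : ℕ, p + 2 ≤ a + b ∧ z =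
        Ideal.Quotient.mk I (X 0 ^ a * X 1 ^ b)}
      = (Ideal.Quotient.mk I) '' {f : A | ∃ a b : ℕ, p + 2 ≤ a + b ∧ f = X 0 ^ a * X 1 ^ b} := by
    ext z
    constructor
    · rintro ⟨a, b, hab, rfl⟩
      exact ⟨X 0 ^ a * X 1 ^ b, ⟨a, b, hab, rfl⟩, rfl⟩
    · rintro ⟨f, ⟨a, b, hab, rfl⟩, rfl⟩
      exact ⟨a, b, hab, rfl⟩
  rw [hset, ← Ideal.map_span, Ideal.mem_quotient_iff_mem_sup]
  -- now a statement in A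
  have hr0 : ((X 0 + 1) ^ p - 1 : A) ∈ I := Ideal.subset_span (Set.mem_insert _ _)
  have hr1 : ((X 1 + 1) ^ p - 1 : A) ∈ I :=
    Ideal.subset_span (Set.mem_insert_of_mem _ rfl)
  have hmono : ∀ a b : ℕ, p + 2 ≤ a + b → (X 0 ^ a * X 1 ^ b : A) ∈ M :=
    fun a b hab => Ideal.subset_span ⟨a, b, hab, rfl⟩
  obtain ⟨H0, hH0⟩ := aux_exists p hp (X 0 : A)
  obtain ⟨H1, hH1⟩ := aux_exists p hp (X 1 : A)
  -- key lemma
  have key : ∀ k : ℕ, ∀ a b : ℕ, ∀ f : A, 3 ≤ a + b → p + 2 ≤ a + b + k →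
      (p : A) * (X 0 ^ a * X 1 ^ b * f) ∈ M ⊔ I := by
    intro k
    induction k with
    | zero =>
      intro a b f h3 hk
      refine Ideal.mem_sup_left ?_
      have : (p : A) * (X 0 ^ a * X 1 ^ b * f) = X 0 ^ a * X 1 ^ b * ((p : A) * f) := by ring
      rw [this]
      exact Ideal.mul_mem_right _ _ (hmono a b (by omega))
    | succ k ih =>
      intro a b f h3 hk
      by_cases h : p + 2 ≤ a + b + k
      · exact ih a b f h3 h
      rcases Nat.lt_or_ge a 1 with ha | ha
      · -- a = 0, so b ≥ 3, use the X 1 relation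
        obtain ⟨b', rfl⟩ : ∃ b', b = b' + 1 := ⟨b - 1, by omega⟩
        have e : (p : A) * (X 0 ^ a * X 1 ^ (b' + 1) * f)
            = ((X 1 + 1) ^ p - 1) * (X 0 ^ a * X 1 ^ b' * f)
              - X 0 ^ a * X 1 ^ (p + b') * f
              - (p : A) * (X 0 ^ a * X 1 ^ (b' + 2) * (H1 * f)) := by
          linear_combination (-(X 0 ^ a * X 1 ^ b' * f)) * hH1
        rw [e]
        refine sub_mem (sub_mem (Ideal.mem_sup_right (Ideal.mul_mem_right _ _ hr1)) ?_) ?_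
        · refine Ideal.mem_sup_left ?_
          have e2 : (X 0 ^ a * X 1 ^ (p + b') * f : A)
              = X 0 ^ a * X 1 ^ (p + b') * f := rfl
          exact Ideal.mul_mem_right _ _ (hmono a (p + b') (by omega))
        · exact ih a (b' + 2) (H1 * f) (by omega) (by omega)
      · obtain ⟨a', rfl⟩ : ∃ a', a = a' + 1 := ⟨a - 1, by omega⟩
        have e : (p : A) * (X 0 ^ (a' + 1) * X 1 ^ b * f)
            = ((X 0 + 1) ^ p - 1) * (X 0 ^ a' * X 1 ^ b * f)
              - X 0 ^ (p + a') * X 1 ^ b * f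
              - (p : A) * (X 0 ^ (a' + 2) * X 1 ^ b * (H0 * f)) := by
          linear_combination (-(X 0 ^ a' * X 1 ^ b * f)) * hH0
        rw [e]
        refine sub_mem (sub_mem (Ideal.mem_sup_right (Ideal.mul_mem_right _ _ hr0)) ?_) ?_
        · exact Ideal.mem_sup_left (Ideal.mul_mem_right _ _ (hmono (p + a') b (by omega)))
        · exact ih (a' + 2) b (H0 * f) (by omega) (by omega)
  have emain : (X 0 ^ p * X 1 - X 0 * X 1 ^ p : A)
      = ((X 0 + 1) ^ p - 1) * X 1 - X 0 * ((X 1 + 1) ^ p - 1)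
        - (p : A) * (X 0 ^ 2 * X 1 ^ 1 * H0) + (p : A) * (X 0 ^ 1 * X 1 ^ 2 * H1) := by
    linear_combination (X 0 : A) * hH1 - (X 1 : A) * hH0
  rw [emain]
  refine add_mem (sub_mem (sub_mem ?_ ?_) ?_) ?_
  · exact Ideal.mem_sup_right (Ideal.mul_mem_right _ _ hr0)
  · exact Ideal.mem_sup_right (Ideal.mul_mem_left _ _ hr1)
  · exact key p 2 1 H0 (by omega) (by omega)
  · exact key p 1 2 H1 (by omega) (by omega)
end

section
/- Let p be a prime and k, l ≥ 1. The monomial functions (𝔽_p)^k → 𝔽_p of the form (t₁, …, t_k) ↦ t₁^{s₁} ⋯ t_k^{s_k}, where s ranges over tuples of nonnegative integers with s₁ + ⋯ + s_k = l and such that all coordinates of s except possibly the first nonzero one are at most p − 1, are linearly independent over 𝔽_p. -/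
open MvPolynomial Finset

/-- Reduction of an exponent modulo `p - 1`, sending `0` to `0` and positive `n` to the
representative in `{1, …, p-1}`. -/
def rhoExp (p n : ℕ) : ℕ := if n = 0 then 0 else (n - 1) % (p - 1) + 1

lemma rhoExp_eq_zero_iff (p n : ℕ) : rhoExp p n = 0 ↔ n = 0 := by
  unfold rhoExp; split <;> simp_all

lemma rhoExp_le (p n : ℕ) (hp : 2 ≤ p) : rhoExp p n ≤ p - 1 := by
  unfold rhoExp; split
  · omega
  · have : (n - 1) % (p - 1) < p - 1 := Nat.mod_lt _ (by omega)
    omega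

lemma rhoExp_eq_self (p n : ℕ) (hp : 2 ≤ p) (h : n ≤ p - 1) : rhoExp p n = n := by
  unfold rhoExp; split
  · omega
  · rw [Nat.mod_eq_of_lt (by omega)]; omega

lemma pow_rhoExp (p : ℕ) [Fact p.Prime] (t : ZMod p) (n : ℕ) :
    t ^ n = t ^ rhoExp p n := by
  have hp : 2 ≤ p := (Fact.out : p.Prime).two_le
  rcases eq_or_ne n 0 with rfl | hn
  · rfl
  unfold rhoExp
  rw [if_neg hn]
  rcases eq_or_ne t 0 with rfl | ht
  · rw [zero_pow hn, zero_pow (by omega)]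
  · have h1 : t ^ (p - 1) = 1 := ZMod.pow_card_sub_one_eq_one ht
    have hd : n = (n - 1) % (p - 1) + 1 + (p - 1) * ((n - 1) / (p - 1)) := by
      have := Nat.div_add_mod (n - 1) (p - 1)
      omega
    calc t ^ n = t ^ ((n - 1) % (p - 1) + 1) * (t ^ (p - 1)) ^ ((n - 1) / (p - 1)) := by
          rw [← pow_mul, ← pow_add, ← hd]
      _ = t ^ ((n - 1) % (p - 1) + 1) := by rw [h1, one_pow, mul_one]

/-- The monomial functions with all exponents `< p` are linearly independent. -/
lemma linearIndependent_monomials (p k : ℕ) [Fact p.Prime] :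
    LinearIndependent (ZMod p)
      (fun e : Fin k → Fin p => fun t : Fin k → ZMod p => ∏ i, (t i) ^ (e i : ℕ)) := by
  classical
  rw [Fintype.linearIndependent_iff]
  intro g hg e₀
  set D : (Fin k → Fin p) → (Fin k →₀ ℕ) :=
    fun e => Finsupp.equivFunOnFinite.symm (fun i => (e i : ℕ)) with hD
  have hDinj : Function.Injective D := by
    intro a b hab
    have : (fun i => (a i : ℕ)) = fun i => (b i : ℕ) :=
      Finsupp.equivFunOnFinite.symm.injective hab
    funext i
    exact Fin.val_injective (congrFun this i)
  have hDapp : ∀ e i, D e i = (e i : ℕ) := fun e i => rfl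
  set P : MvPolynomial (Fin k) (ZMod p) := ∑ e, MvPolynomial.monomial (D e) (g e) with hP
  have hev : ∀ v : Fin k → ZMod p, eval v P = 0 := by
    intro v
    have hv := congrFun hg v
    simp only [Finset.sum_apply, Pi.smul_apply, Pi.zero_apply, smul_eq_mul] at hv
    rw [hP, map_sum, ← hv]
    refine Finset.sum_congr rfl fun e _ => ?_
    rw [eval_monomial]
    congr 1
    rw [Finsupp.prod_fintype _ _ (fun i => pow_zero _)]
    rfl
  have hmem : P ∈ restrictDegree (Fin k) (ZMod p) (Fintype.card (ZMod p) - 1) := by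
    refine Submodule.sum_mem _ fun e _ => ?_
    rw [mem_restrictDegree]
    intro s hs i
    have hsub := MvPolynomial.support_monomial_subset hs
    simp only [Finset.mem_singleton] at hsub
    subst hsub
    rw [hDapp, ZMod.card]
    exact Nat.le_sub_one_of_lt (e i).isLt
  have hP0 : P = 0 := eq_zero_of_eval_eq_zero (Fin k) (ZMod p) P hev hmem
  have hc := congrArg (MvPolynomial.coeff (D e₀)) hP0
  rw [hP, MvPolynomial.coeff_sum] at hc
  simp only [MvPolynomial.coeff_monomial, MvPolynomial.coeff_zero] at hc
  have h1 : (∑ e : Fin k → Fin p, if D e = D e₀ then g e else 0)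
      = ∑ e : Fin k → Fin p, if e = e₀ then g e else 0 := by
    refine Finset.sum_congr rfl fun e _ => ?_
    congr 1
    exact propext ⟨fun h => hDinj h, fun h => congrArg D h⟩
  rw [h1, Finset.sum_ite_eq' Finset.univ e₀ g, if_pos (Finset.mem_univ _)] at hc
  exact hc

/-- The monomial functions `(t₁,…,t_k) ↦ ∏ tᵢ^{sᵢ}` on `(𝔽_p)^k`, where `s` runs over
tuples of nonnegative integers summing to `l` in which every coordinate except possibly
the first nonzero one is at most `p − 1`, are linearly independent over `𝔽_p`. -/
theorem stmt7 (p k l : ℕ) [Fact p.Prime] (hk : 1 ≤ k) (hl : 1 ≤ l) :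
    LinearIndependent (ZMod p)
      (fun s : {s : Fin k → ℕ // (∑ i, s i) = l ∧
          ∀ i j : Fin k, i < j → s i ≠ 0 → s j ≤ p - 1} =>
        (fun t : Fin k → ZMod p => ∏ i, (t i) ^ (s.1 i))) := by
  classical
  have hp : 2 ≤ p := (Fact.out : p.Prime).two_le
  set φ : {s : Fin k → ℕ // (∑ i, s i) = l ∧
      ∀ i j : Fin k, i < j → s i ≠ 0 → s j ≤ p - 1} → (Fin k → Fin p) :=
    fun s i => ⟨rhoExp p (s.1 i), lt_of_le_of_lt (rhoExp_le p _ hp) (by omega)⟩ with hφ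
  have hmin : ∀ s : {s : Fin k → ℕ // (∑ i, s i) = l ∧
      ∀ i j : Fin k, i < j → s i ≠ 0 → s j ≤ p - 1},
      ∃ i₀ : Fin k, s.1 i₀ ≠ 0 ∧ ∀ j, j < i₀ → s.1 j = 0 := by
    intro s
    have hne : ∃ i, s.1 i ≠ 0 := by
      by_contra h
      push_neg at h
      have : (∑ i, s.1 i) = 0 := Finset.sum_eq_zero (fun i _ => h i)
      have := s.2.1
      omega
    have hFne : (Finset.univ.filter (fun i => s.1 i ≠ 0)).Nonempty :=
      ⟨hne.choose, by simp [hne.choose_spec]⟩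
    refine ⟨Finset.min' _ hFne, ?_, ?_⟩
    · have := Finset.min'_mem _ hFne
      simpa using this
    · intro j hj
      by_contra hj0
      have hjF : j ∈ Finset.univ.filter (fun i => s.1 i ≠ 0) := by simp [hj0]
      exact absurd (Finset.min'_le _ j hjF) (not_le.mpr hj)
  have hφinj : Function.Injective φ := by
    intro s s' hss
    have hr : ∀ i, rhoExp p (s.1 i) = rhoExp p (s'.1 i) := by
      intro i
      exact congrArg Fin.val (congrFun hss i)
    obtain ⟨i₀, hi₀, hmin₀⟩ := hmin s
    have hi₀' : s'.1 i₀ ≠ 0 := by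
      have hner : rhoExp p (s'.1 i₀) ≠ 0 := by
        rw [← hr, Ne, rhoExp_eq_zero_iff]; exact hi₀
      exact fun h => hner ((rhoExp_eq_zero_iff p _).mpr h)
    have hne : ∀ j, j ≠ i₀ → s.1 j = s'.1 j := by
      intro j hj
      rcases hj.lt_or_gt with h | h
      · have h0 : s.1 j = 0 := hmin₀ j h
        have h0' : rhoExp p (s'.1 j) = 0 := by
          rw [← hr, h0]; rfl
        rw [h0, (rhoExp_eq_zero_iff p _).mp h0']
      · have hle : s.1 j ≤ p - 1 := s.2.2 i₀ j h hi₀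
        have hle' : s'.1 j ≤ p - 1 := s'.2.2 i₀ j h hi₀'
        rw [← rhoExp_eq_self p (s.1 j) hp hle, hr, rhoExp_eq_self p _ hp hle']
    have hsum : s.1 i₀ + ∑ j ∈ Finset.univ.erase i₀, s.1 j = l := by
      rw [Finset.add_sum_erase _ _ (Finset.mem_univ i₀)]; exact s.2.1
    have hsum' : s'.1 i₀ + ∑ j ∈ Finset.univ.erase i₀, s'.1 j = l := by
      rw [Finset.add_sum_erase _ _ (Finset.mem_univ i₀)]; exact s'.2.1
    have hte : ∑ j ∈ Finset.univ.erase i₀, s.1 j = ∑ j ∈ Finset.univ.erase i₀, s'.1 j :=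
      Finset.sum_congr rfl (fun j hj => hne j (Finset.ne_of_mem_erase hj))
    have hi0eq : s.1 i₀ = s'.1 i₀ := by omega
    apply Subtype.ext
    funext j
    by_cases hji : j = i₀
    · subst hji; exact hi0eq
    · exact hne j hji
  have hLI := (linearIndependent_monomials p k).comp φ hφinj
  have heq : (fun s : {s : Fin k → ℕ // (∑ i, s i) = l ∧
          ∀ i j : Fin k, i < j → s i ≠ 0 → s j ≤ p - 1} =>
        (fun t : Fin k → ZMod p => ∏ i, (t i) ^ (s.1 i))) =
      (fun e : Fin k → Fin p => fun t : Fin k → ZMod p => ∏ i, (t i) ^ (e i : ℕ)) ∘ φ := by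
    funext s
    funext t
    simp only [Function.comp_apply]
    exact Finset.prod_congr rfl (fun i _ => pow_rhoExp p (t i) (s.1 i))
  rw [heq]
  exact hLI
end
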